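/- Let C_k ∈ 𝔖_k^{fix} be parametrized by (x_k, y_k, a_k, b_k) as in the fixed-point form with x_k + (k−1)a_k = 1 and y_k + a_k + (k−2)b_k = 0. If g_{S_k}(C_k) ≤ 9/8 for all k, then as k → ∞: y_k = O(1/k²), x_k = O(1/k), a_k = 1/k + O(1/k²), and b_k = −1/k² + O(1/k³). -/

import Mathlib

open Finset Filter

/-- Membership in the affine set 𝔖ₖ. -/
def inSk (k : ℕ) (C : Fin k → Matrix (Fin k) (Fin k) ℝ) : Prop :=
  ∀ ℓ : Fin k,
    (∀ i : Fin k, i ≠ ℓ → ∑ j, C ℓ i j = 0) ∧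
    (∀ j : Fin k, j ≠ ℓ → ∑ i, C ℓ i j = 0) ∧
    (∑ i, ∑ j, C ℓ i j = 1)

/-- A k-sample: nonempty subset of [k]×[k] with pairwise distinct second coordinates. -/
def IsSample {k : ℕ} (s : Finset (Fin k × Fin k)) : Prop :=
  s.Nonempty ∧ ∀ p ∈ s, ∀ q ∈ s, p ≠ q → p.2 ≠ q.2

/-- g_s^{(ℓ)}(C) -/
def gPart {k : ℕ} (s : Finset (Fin k × Fin k)) (C : Fin k → Matrix (Fin k) (Fin k) ℝ)
    (ℓ : Fin k) : ℝ :=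
  ∑ p ∈ s, C ℓ p.1 p.2

/-- g_s(C) -/
def gSample {k : ℕ} (s : Finset (Fin k × Fin k)) (C : Fin k → Matrix (Fin k) (Fin k) ℝ) : ℝ :=
  ∑ ℓ : Fin k, |gPart s C ℓ|

/-- g_{S_k}(C) : the maximum of g_s(C) over all k-samples s. -/
noncomputable def gMax (k : ℕ) (C : Fin k → Matrix (Fin k) (Fin k) ℝ) : ℝ :=
  ⨆ s : {s : Finset (Fin k × Fin k) // IsSample s}, gSample s.1 C

/-- multiplicity of ℓ in the multiset of coordinates of elements of s -/
def mult {k : ℕ} (s : Finset (Fin k × Fin k)) (ℓ : Fin k) : ℕ :=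
  (s.filter (fun p => p.1 = ℓ)).card + (s.filter (fun p => p.2 = ℓ)).card

/-- β(s): number of distinct indices among coordinates of s -/
def beta {k : ℕ} (s : Finset (Fin k × Fin k)) : ℕ :=
  (s.image Prod.fst ∪ s.image Prod.snd).card

/-- γ(s): number of diagonal elements of s -/
def gamma {k : ℕ} (s : Finset (Fin k × Fin k)) : ℕ :=
  (s.filter (fun p => p.1 = p.2)).card

/-- the strong homogeneous flow C*_k -/
noncomputable def Cstar (k : ℕ) : Fin k → Matrix (Fin k) (Fin k) ℝ :=
  fun ℓ i j =>
    if i = ℓ ∧ j = ℓ then 2/(k:ℝ) - 1/(k:ℝ)^2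
    else if i = ℓ ∨ j = ℓ then 1/(k:ℝ) - 1/(k:ℝ)^2
    else -1/(k:ℝ)^2

/-- the Sym(k)-invariant tuple with parameters x (i=j=ℓ), y (i=j≠ℓ),
a (exactly one of i,j equals ℓ), b (otherwise) -/
def Cfix (k : ℕ) (x y a b : ℝ) : Fin k → Matrix (Fin k) (Fin k) ℝ :=
  fun ℓ i j =>
    if i = ℓ ∧ j = ℓ then x
    else if i = j then y
    else if i = ℓ ∨ j = ℓ then a
    else b

/-- The Sym(k)-action on tuples of matrices. -/
def permAct {k : ℕ} (σ : Equiv.Perm (Fin k)) (C : Fin k → Matrix (Fin k) (Fin k) ℝ) :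
    Fin k → Matrix (Fin k) (Fin k) ℝ :=
  fun ℓ i j => C (σ⁻¹ ℓ) (σ⁻¹ i) (σ⁻¹ j)

/-- optimal value O_k -/
noncomputable def Ovalue (k : ℕ) : ℝ := sInf {y | ∃ C, inSk k C ∧ gMax k C = y}

section Aux

def sdiag (k m : ℕ) : Finset (Fin k × Fin k) :=
  (Finset.univ.filter (fun i : Fin k => i.val < m)).image (fun i => (i, i))

lemma card_filter_lt (k m : ℕ) (hmk : m ≤ k) :
    (Finset.univ.filter (fun i : Fin k => i.val < m)).card = m := by
  have : (Finset.univ.filter (fun i : Fin k => i.val < m))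
      = Finset.map (Fin.castLEEmb hmk) Finset.univ := by
    ext i
    simp only [Finset.mem_filter, Finset.mem_univ, true_and, Finset.mem_map,
      Fin.castLEEmb, Function.Embedding.coeFn_mk]
    constructor
    · intro h; exact ⟨⟨i.val, h⟩, rfl⟩
    · rintro ⟨j, rfl⟩; exact j.isLt
  rw [this, Finset.card_map, Finset.card_univ, Fintype.card_fin]

lemma gPart_sdiag (k m : ℕ) (hmk : m ≤ k) (x y a b : ℝ) (ℓ : Fin k) :
    gPart (sdiag k m) (Cfix k x y a b) ℓ
      = if ℓ.val < m then x + ((m:ℝ) - 1) * y else (m:ℝ) * y := by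
  rw [gPart, sdiag, Finset.sum_image (fun i _ j _ h => ((Prod.mk.injEq _ _ _ _).mp h).1)]
  have hC : ∀ i : Fin k, Cfix k x y a b ℓ i i = if i = ℓ then x else y := by
    intro i
    by_cases h : i = ℓ <;> simp [Cfix, h]
  simp_rw [hC]
  have : ∀ i : Fin k, (if i = ℓ then x else y) = (if i = ℓ then x - y else 0) + y := by
    intro i; by_cases h : i = ℓ <;> simp [h]
  simp_rw [this]
  rw [Finset.sum_add_distrib, Finset.sum_ite_eq' _ ℓ (fun _ => x - y), Finset.sum_const,
    card_filter_lt k m hmk]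
  by_cases h : ℓ.val < m <;> simp [Finset.mem_filter, h, nsmul_eq_mul] <;> ring

lemma gSample_sdiag (k m : ℕ) (hmk : m ≤ k) (x y a b : ℝ) :
    gSample (sdiag k m) (Cfix k x y a b)
      = (m:ℝ) * |x + ((m:ℝ) - 1) * y| + ((k:ℝ) - (m:ℝ)) * ((m:ℝ) * |y|) := by
  rw [gSample]
  simp_rw [gPart_sdiag k m hmk x y a b, apply_ite abs]
  rw [Finset.sum_ite, Finset.sum_const, Finset.sum_const, card_filter_lt k m hmk]
  have hcard : (Finset.univ.filter (fun i : Fin k => ¬ i.val < m)).card = k - m := by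
    have := Finset.card_filter_add_card_filter_not (s := (Finset.univ : Finset (Fin k)))
      (p := fun i : Fin k => i.val < m)
    rw [card_filter_lt k m hmk, Finset.card_univ, Fintype.card_fin] at this
    omega
  rw [hcard, nsmul_eq_mul, nsmul_eq_mul, Nat.cast_sub hmk, abs_mul, Nat.abs_cast]

lemma sdiag_isSample (k m : ℕ) (hm : 1 ≤ m) (hmk : m ≤ k) : IsSample (sdiag k m) := by
  have hk : 0 < k := lt_of_lt_of_le hm hmk
  refine ⟨⟨(⟨0, hk⟩, ⟨0, hk⟩), Finset.mem_image.mpr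
    ⟨⟨0, hk⟩, Finset.mem_filter.mpr ⟨Finset.mem_univ _, hm⟩, rfl⟩⟩, ?_⟩
  intro p hp q hq hpq
  simp only [sdiag, Finset.mem_image, Finset.mem_filter] at hp hq
  obtain ⟨i, _, rfl⟩ := hp
  obtain ⟨j, _, rfl⟩ := hq
  simp_all

lemma gSample_le_gMax {k : ℕ} (s : Finset (Fin k × Fin k)) (hs : IsSample s)
    (C : Fin k → Matrix (Fin k) (Fin k) ℝ) : gSample s C ≤ gMax k C :=
  le_ciSup (f := fun t : {s : Finset (Fin k × Fin k) // IsSample s} => gSample t.1 C)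
    (Set.Finite.bddAbove (Set.finite_range _)) ⟨s, hs⟩

lemma key (k m : ℕ) (hm : 1 ≤ m) (hmk : m ≤ k) (x y a b : ℝ)
    (hg : gMax k (Cfix k x y a b) ≤ 9/8) :
    (m:ℝ) * |x + ((m:ℝ) - 1) * y| + ((k:ℝ) - (m:ℝ)) * ((m:ℝ) * |y|) ≤ 9/8 :=
  (gSample_sdiag k m hmk x y a b) ▸
    (le_trans (gSample_le_gMax _ (sdiag_isSample k m hm hmk) _) hg)

end Aux

open Asymptotics in
theorem stmt9 (x y a b : ℕ → ℝ)
    (h1 : ∀ k : ℕ, x k + ((k:ℝ) - 1) * a k = 1)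
    (h2 : ∀ k : ℕ, y k + a k + ((k:ℝ) - 2) * b k = 0)
    (hg : ∀ k : ℕ, gMax k (Cfix k (x k) (y k) (a k) (b k)) ≤ 9/8) :
    y =O[atTop] (fun k : ℕ => 1/(k:ℝ)^2) ∧
    x =O[atTop] (fun k : ℕ => 1/(k:ℝ)) ∧
    (fun k : ℕ => a k - 1/(k:ℝ)) =O[atTop] (fun k : ℕ => 1/(k:ℝ)^2) ∧
    (fun k : ℕ => b k + 1/(k:ℝ)^2) =O[atTop] (fun k : ℕ => 1/(k:ℝ)^3) := by
  have hy : ∀ k : ℕ, 2 ≤ k → (k:ℝ)^2 * |y k| ≤ 9 := by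
    intro k hk
    set m := k / 2 with hmdef
    have hm1 : 1 ≤ m := by omega
    have hmk : m ≤ k := by omega
    have hkey := key k m hm1 hmk (x k) (y k) (a k) (b k) (hg k)
    have hu1 : (k:ℝ) - 1 ≤ 2 * (m:ℝ) := by
      have h' : (k:ℝ) ≤ 2 * (m:ℝ) + 1 := by exact_mod_cast (by omega : k ≤ 2 * m + 1)
      linarith
    have hu2 : 2 * (m:ℝ) ≤ (k:ℝ) := by exact_mod_cast (by omega : 2 * m ≤ k)
    have hkr : (2:ℝ) ≤ (k:ℝ) := by exact_mod_cast hk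
    have hterm1 : (0:ℝ) ≤ (m:ℝ) * |x k + ((m:ℝ) - 1) * y k| :=
      mul_nonneg (Nat.cast_nonneg m) (abs_nonneg _)
    have h9 : ((k:ℝ) - (m:ℝ)) * ((m:ℝ) * |y k|) ≤ 9/8 := by linarith
    have hprod : (k:ℝ)^2 ≤ 8 * (((k:ℝ) - (m:ℝ)) * (m:ℝ)) := by
      nlinarith [mul_nonneg (by linarith : (0:ℝ) ≤ 2*(m:ℝ) - ((k:ℝ) - 1))
        (by linarith : (0:ℝ) ≤ (k:ℝ) - 2*(m:ℝ))]
    nlinarith [mul_le_mul_of_nonneg_right hprod (abs_nonneg (y k)), abs_nonneg (y k)]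
  have hx : ∀ k : ℕ, 2 ≤ k → (k:ℝ) * |x k| ≤ 11 := by
    intro k hk
    have hkey := key k k (by omega) le_rfl (x k) (y k) (a k) (b k) (hg k)
    have hkr : (2:ℝ) ≤ (k:ℝ) := by exact_mod_cast hk
    have hyk := hy k hk
    have habs : |x k| ≤ |x k + ((k:ℝ) - 1) * y k| + ((k:ℝ) - 1) * |y k| := by
      have h' := abs_add_le (x k + ((k:ℝ) - 1) * y k) (-(((k:ℝ) - 1) * y k))
      simp only [add_neg_cancel_right, abs_neg, abs_mul] at h'
      calc |x k| ≤ |x k + ((k:ℝ) - 1) * y k| + |(k:ℝ) - 1| * |y k| := h'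
        _ = |x k + ((k:ℝ) - 1) * y k| + ((k:ℝ) - 1) * |y k| := by
            rw [abs_of_nonneg (by linarith : (0:ℝ) ≤ (k:ℝ) - 1)]
    nlinarith [abs_nonneg (y k), abs_nonneg (x k + ((k:ℝ) - 1) * y k),
      mul_le_mul_of_nonneg_left habs (by linarith : (0:ℝ) ≤ (k:ℝ))]
  have ha : ∀ k : ℕ, 2 ≤ k → (k:ℝ)^2 * |a k - 1/(k:ℝ)| ≤ 24 := by
    intro k hk
    have hkr : (2:ℝ) ≤ (k:ℝ) := by exact_mod_cast hk
    have hk0 : (k:ℝ) ≠ 0 := by linarith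
    have hxk := hx k hk
    have e : ((k:ℝ) * ((k:ℝ) - 1)) * (a k - 1/(k:ℝ)) = 1 - (k:ℝ) * x k := by
      field_simp
      linear_combination ((k:ℝ)) * h1 k
    have e2 : ((k:ℝ) * ((k:ℝ) - 1)) * |a k - 1/(k:ℝ)| = |1 - (k:ℝ) * x k| := by
      rw [← abs_of_nonneg (by nlinarith : (0:ℝ) ≤ (k:ℝ) * ((k:ℝ) - 1)), ← abs_mul, e]
    have e3 : |1 - (k:ℝ) * x k| ≤ 1 + (k:ℝ) * |x k| := by
      have h' := abs_sub (1:ℝ) ((k:ℝ) * x k)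
      rw [abs_one, abs_mul, abs_of_nonneg (by linarith : (0:ℝ) ≤ (k:ℝ))] at h'
      exact h'
    nlinarith [abs_nonneg (a k - 1/(k:ℝ))]
  have hb : ∀ k : ℕ, 3 ≤ k → (k:ℝ)^3 * |b k + 1/(k:ℝ)^2| ≤ 105 := by
    intro k hk
    have hkr : (3:ℝ) ≤ (k:ℝ) := by exact_mod_cast hk
    have hk0 : (k:ℝ) ≠ 0 := by linarith
    have hyk := hy k (by omega)
    have hak := ha k (by omega)
    have e : ((k:ℝ)^2 * ((k:ℝ) - 2)) * (b k + 1/(k:ℝ)^2)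
        = -((k:ℝ)^2 * y k) - (k:ℝ)^2 * (a k - 1/(k:ℝ)) - 2 := by
      field_simp
      linear_combination ((k:ℝ)^2) * h2 k
    have e2 : ((k:ℝ)^2 * ((k:ℝ) - 2)) * |b k + 1/(k:ℝ)^2|
        = |-((k:ℝ)^2 * y k) - (k:ℝ)^2 * (a k - 1/(k:ℝ)) - 2| := by
      rw [← abs_of_nonneg (by nlinarith : (0:ℝ) ≤ (k:ℝ)^2 * ((k:ℝ) - 2)), ← abs_mul, e]
    have e3 : |-((k:ℝ)^2 * y k) - (k:ℝ)^2 * (a k - 1/(k:ℝ)) - 2|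
        ≤ (k:ℝ)^2 * |y k| + (k:ℝ)^2 * |a k - 1/(k:ℝ)| + 2 := by
      have h3 := abs_add_three (-((k:ℝ)^2 * y k)) (-((k:ℝ)^2 * (a k - 1/(k:ℝ)))) (-2 : ℝ)
      rw [show -((k:ℝ)^2 * y k) + -((k:ℝ)^2 * (a k - 1/(k:ℝ))) + -2
          = -((k:ℝ)^2 * y k) - (k:ℝ)^2 * (a k - 1/(k:ℝ)) - 2 by ring] at h3
      rw [abs_neg, abs_neg, abs_mul, abs_mul,
        abs_of_nonneg (by positivity : (0:ℝ) ≤ (k:ℝ)^2)] at h3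
      have : |(-2 : ℝ)| = 2 := by norm_num
      rw [this] at h3
      exact h3
    nlinarith [abs_nonneg (b k + 1/(k:ℝ)^2)]
  refine ⟨?_, ?_, ?_, ?_⟩
  · rw [isBigO_iff]
    refine ⟨9, ?_⟩
    filter_upwards [eventually_ge_atTop 2] with k hk
    have hk0 : (0:ℝ) < (k:ℝ) := by exact_mod_cast (by omega : 0 < k)
    rw [Real.norm_eq_abs, Real.norm_eq_abs, abs_of_pos (by positivity : (0:ℝ) < 1/(k:ℝ)^2),
      mul_one_div, le_div_iff₀ (by positivity : (0:ℝ) < (k:ℝ)^2), mul_comm]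
    exact hy k hk
  · rw [isBigO_iff]
    refine ⟨11, ?_⟩
    filter_upwards [eventually_ge_atTop 2] with k hk
    have hk0 : (0:ℝ) < (k:ℝ) := by exact_mod_cast (by omega : 0 < k)
    rw [Real.norm_eq_abs, Real.norm_eq_abs, abs_of_pos (by positivity : (0:ℝ) < 1/(k:ℝ)),
      mul_one_div, le_div_iff₀ hk0, mul_comm]
    exact hx k hk
  · rw [isBigO_iff]
    refine ⟨24, ?_⟩
    filter_upwards [eventually_ge_atTop 2] with k hk
    have hk0 : (0:ℝ) < (k:ℝ) := by exact_mod_cast (by omega : 0 < k)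
    rw [Real.norm_eq_abs, Real.norm_eq_abs, abs_of_pos (by positivity : (0:ℝ) < 1/(k:ℝ)^2),
      mul_one_div, le_div_iff₀ (by positivity : (0:ℝ) < (k:ℝ)^2), mul_comm]
    exact ha k hk
  · rw [isBigO_iff]
    refine ⟨105, ?_⟩
    filter_upwards [eventually_ge_atTop 3] with k hk
    have hk0 : (0:ℝ) < (k:ℝ) := by exact_mod_cast (by omega : 0 < k)
    rw [Real.norm_eq_abs, Real.norm_eq_abs, abs_of_pos (by positivity : (0:ℝ) < 1/(k:ℝ)^3),
      mul_one_div, le_div_iff₀ (by positivity : (0:ℝ) < (k:ℝ)^3), mul_comm]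
    exact hb k hk
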